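/- The following identity of formal power series in z and q holds, where both sums are over r_1, r_2, s_1, s_2 ≥ 0 with r_3 := 0, s_0 := 0, and 1/(q;q)_m := 0 and 1/(q²;q²)_m := 0 for m < 0: Σ ∏_{i=1}^{2} [z^{r_i+s_i} q^{(r_i+s_i)²+s_i²+δ_{i,2}(r_i+2s_i)} / ((q;q)_{r_i−r_{i+1}} (q²;q²)_{s_i−s_{i−1}})] · (1 + z q^{2+r_1+r_2+2s_1+2s_2}) = Σ ∏_{i=1}^{2} [z^{r_i+s_i} q^{(r_i+s_i)²+s_i²} / ((q;q)_{r_i−r_{i+1}} (q²;q²)_{s_i−s_{i−1}})] · (q^{r_2+2s_2} + q^{r_1+2s_1}(1 − q^{2s_2−2s_1})). -/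

import Mathlib

noncomputable section

/-- The product topology on power series (coefficientwise convergence). -/
instance (R : Type*) [TopologicalSpace R] : TopologicalSpace (PowerSeries R) :=
  inferInstanceAs (TopologicalSpace ((Unit →₀ ℕ) → R))

/-- `1/(q^b; q^b)_m` as a power series in `q`, with the convention that it is `0`
for `m < 0`.  Here `(q^b; q^b)_m = ∏_{i=0}^{m-1} (1 - q^{b(i+1)})`. -/
def pinv (b : ℕ) (m : ℤ) : PowerSeries ℚ :=
  if m < 0 then 0
  else (∏ i ∈ Finset.range m.toNat, (1 - (PowerSeries.X : PowerSeries ℚ) ^ (b * (i + 1))))⁻¹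

/-- The inclusion of `q`-series into two-variable series (`z` outer, `q` inner). -/
def Cq : PowerSeries ℚ →+* PowerSeries (PowerSeries ℚ) := PowerSeries.C

/-- The variable `z`. -/
def Zv : PowerSeries (PowerSeries ℚ) := PowerSeries.X

/-- The variable `q`. -/
def Qv : PowerSeries (PowerSeries ℚ) := PowerSeries.C PowerSeries.X

/-- The common factor
`z^{r₁+s₁+r₂+s₂} / ((q;q)_{r₁−r₂} (q;q)_{r₂} (q²;q²)_{s₁} (q²;q²)_{s₂−s₁})`
of the Andrews–Gordon-type multisums (with `r₃ = s₀ = 0`). -/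
def agBase (r₁ r₂ s₁ s₂ : ℕ) : PowerSeries (PowerSeries ℚ) :=
  Zv ^ (r₁ + s₁ + r₂ + s₂) *
    Cq (pinv 1 ((r₁ : ℤ) - r₂) * pinv 1 (r₂ : ℤ) * pinv 2 (s₁ : ℤ) * pinv 2 ((s₂ : ℤ) - s₁))

/- ### Auxiliary material -/

instance (R : Type*) [TopologicalSpace R] [T2Space R] : T2Space (PowerSeries R) :=
  inferInstanceAs (T2Space ((Unit →₀ ℕ) → R))

instance (R : Type*) [Semiring R] [TopologicalSpace R] [ContinuousAdd R] :
    ContinuousAdd (PowerSeries R) :=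
  inferInstanceAs (ContinuousAdd ((Unit →₀ ℕ) → R))

lemma pinv_neg (b : ℕ) (m : ℤ) (h : m < 0) : pinv b m = 0 := if_pos h

open PowerSeries

lemma pinv_succ (b m : ℕ) (hb : 0 < b) :
    pinv b ((m : ℤ) + 1) * (1 - (PowerSeries.X : PowerSeries ℚ) ^ (b * (m + 1))) =
      pinv b (m : ℤ) := by
  rw [pinv, pinv, if_neg (by omega), if_neg (by omega)]
  have h3 : ((m : ℤ) + 1).toNat = m + 1 := by omega
  have h4 : ((m : ℤ)).toNat = m := by omega
  rw [h3, h4, Finset.prod_range_succ, PowerSeries.mul_inv_rev]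
  have hu : PowerSeries.constantCoeff
      (1 - (PowerSeries.X : PowerSeries ℚ) ^ (b * (m + 1))) ≠ 0 := by
    have hne : b * (m + 1) ≠ 0 := by positivity
    simp [map_sub, map_pow, zero_pow hne]
  calc (1 - (X : PowerSeries ℚ) ^ (b * (m + 1)))⁻¹ *
        (∏ i ∈ Finset.range m, (1 - (X : PowerSeries ℚ) ^ (b * (i + 1))))⁻¹ *
        (1 - (X : PowerSeries ℚ) ^ (b * (m + 1)))
      = (∏ i ∈ Finset.range m, (1 - (X : PowerSeries ℚ) ^ (b * (i + 1))))⁻¹ *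
        ((1 - (X : PowerSeries ℚ) ^ (b * (m + 1)))⁻¹ *
          (1 - (X : PowerSeries ℚ) ^ (b * (m + 1)))) := by ring
    _ = _ := by rw [PowerSeries.inv_mul_cancel _ hu, mul_one]

lemma agBase_eq_zero (r₁ r₂ s₁ s₂ : ℕ) (h : s₂ < s₁) : agBase r₁ r₂ s₁ s₂ = 0 := by
  have h0 : pinv 2 ((s₂ : ℤ) - s₁) = 0 := pinv_neg _ _ (by omega)
  simp [agBase, h0]

/-- weight in `z` -/
def wt (t : ℕ × ℕ × ℕ × ℕ) : ℕ := t.1 + t.2.2.1 + t.2.1 + t.2.2.2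

/-- common quadratic exponent -/
def Ew (t : ℕ × ℕ × ℕ × ℕ) : ℕ :=
  (t.1 + t.2.2.1) ^ 2 + t.2.2.1 ^ 2 + (t.2.1 + t.2.2.2) ^ 2 + t.2.2.2 ^ 2

/-- product of the `pinv` factors -/
def pp (t : ℕ × ℕ × ℕ × ℕ) : PowerSeries ℚ :=
  pinv 1 ((t.1 : ℤ) - t.2.1) * pinv 1 (t.2.1 : ℤ) * pinv 2 (t.2.2.1 : ℤ) *
    pinv 2 ((t.2.2.2 : ℤ) - t.2.2.1)

def Af (t : ℕ × ℕ × ℕ × ℕ) : PowerSeries (PowerSeries ℚ) :=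
  agBase t.1 t.2.1 t.2.2.1 t.2.2.2 * Qv ^ (Ew t + t.2.1 + 2 * t.2.2.2)

def Bf (t : ℕ × ℕ × ℕ × ℕ) : PowerSeries (PowerSeries ℚ) :=
  agBase t.1 t.2.1 t.2.2.1 t.2.2.2 * Zv *
    Qv ^ (Ew t + 2 + t.1 + 2 * t.2.1 + 2 * t.2.2.1 + 4 * t.2.2.2)

def Cf (t : ℕ × ℕ × ℕ × ℕ) : PowerSeries (PowerSeries ℚ) :=
  agBase t.1 t.2.1 t.2.2.1 t.2.2.2 * Qv ^ (Ew t + t.1 + 2 * t.2.2.1) *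
    (1 - Qv ^ (2 * t.2.2.2 - 2 * t.2.2.1))

lemma summable_shape (d : ℕ × ℕ × ℕ × ℕ → ℕ)
    (hd : ∀ t, t.1 ≤ d t ∧ t.2.1 ≤ d t ∧ t.2.2.1 ≤ d t ∧ t.2.2.2 ≤ d t)
    (c : ℕ × ℕ × ℕ × ℕ → PowerSeries ℚ) :
    Summable (fun t => (PowerSeries.X : PowerSeries (PowerSeries ℚ)) ^ d t *
      PowerSeries.C (c t)) := by
  apply Pi.summable.mpr
  intro n
  apply summable_of_finite_support
  apply Set.Finite.subset (Set.finite_Icc (0, 0, 0, 0) (n (), n (), n (), n ()))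
  intro t ht
  have hne : ((PowerSeries.X : PowerSeries (PowerSeries ℚ)) ^ d t *
      PowerSeries.C (c t)) n ≠ 0 := ht
  have key : n () = d t := by
    by_contra hc
    apply hne
    have hrw : ((PowerSeries.X : PowerSeries (PowerSeries ℚ)) ^ d t *
        PowerSeries.C (c t)) n
        = PowerSeries.coeff (n ())
            ((PowerSeries.X : PowerSeries (PowerSeries ℚ)) ^ d t * PowerSeries.C (c t)) := by
      conv_lhs => rw [Finsupp.unique_single n]
      rfl
    rw [hrw, mul_comm, PowerSeries.coeff_C_mul, PowerSeries.coeff_X_pow, if_neg hc, mul_zero]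
  have := hd t
  constructor
  · exact ⟨Nat.zero_le _, Nat.zero_le _, Nat.zero_le _, Nat.zero_le _⟩
  · exact ⟨show t.1 ≤ n () by omega, show t.2.1 ≤ n () by omega,
      show t.2.2.1 ≤ n () by omega, show t.2.2.2 ≤ n () by omega⟩

lemma Af_shape (t : ℕ × ℕ × ℕ × ℕ) :
    Af t = (PowerSeries.X : PowerSeries (PowerSeries ℚ)) ^ wt t *
      PowerSeries.C (pp t * PowerSeries.X ^ (Ew t + t.2.1 + 2 * t.2.2.2)) := by
  simp only [Af, agBase, wt, pp, Zv, Qv, Cq, map_mul, map_pow]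
  ring

lemma Bf_shape (t : ℕ × ℕ × ℕ × ℕ) :
    Bf t = (PowerSeries.X : PowerSeries (PowerSeries ℚ)) ^ (wt t + 1) *
      PowerSeries.C (pp t *
        PowerSeries.X ^ (Ew t + 2 + t.1 + 2 * t.2.1 + 2 * t.2.2.1 + 4 * t.2.2.2)) := by
  simp only [Bf, agBase, wt, pp, Zv, Qv, Cq, map_mul, map_pow]
  ring

lemma Cf_shape (t : ℕ × ℕ × ℕ × ℕ) :
    Cf t = (PowerSeries.X : PowerSeries (PowerSeries ℚ)) ^ wt t *
      PowerSeries.C (pp t * PowerSeries.X ^ (Ew t + t.1 + 2 * t.2.2.1) *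
        (1 - PowerSeries.X ^ (2 * t.2.2.2 - 2 * t.2.2.1))) := by
  simp only [Cf, agBase, wt, pp, Zv, Qv, Cq, map_mul, map_sub, map_one, map_pow]
  ring

lemma hA : Summable Af :=
  (summable_shape wt (fun t => by simp only [wt]; omega) _).congr (fun t => (Af_shape t).symm)

lemma hB : Summable Bf :=
  (summable_shape (fun t => wt t + 1) (fun t => by simp only [wt]; omega) _).congr
    (fun t => (Bf_shape t).symm)

lemma hC : Summable Cf :=
  (summable_shape wt (fun t => by simp only [wt]; omega) _).congr (fun t => (Cf_shape t).symm)

lemma Cf_zero (t : ℕ × ℕ × ℕ × ℕ) (h : t.2.2.2 = 0) : Cf t = 0 := by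
  simp [Cf, h]

lemma hBC (t : ℕ × ℕ × ℕ × ℕ) : Bf t = Cf (t.1, t.2.1, t.2.2.1, t.2.2.2 + 1) := by
  obtain ⟨r₁, r₂, s₁, s₂⟩ := t
  by_cases h : s₁ ≤ s₂
  · have h1 : 2 * (s₂ + 1) - 2 * s₁ = 2 * (s₂ - s₁) + 2 := by omega
    have h2 : (s₂ : ℤ) - s₁ = ((s₂ - s₁ : ℕ) : ℤ) := by omega
    have h3 : ((s₂ + 1 : ℕ) : ℤ) - s₁ = ((s₂ - s₁ : ℕ) : ℤ) + 1 := by push_cast; omega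
    have hp : pinv 2 (((s₂ - s₁ : ℕ) : ℤ) + 1) *
        (1 - (PowerSeries.X : PowerSeries ℚ) ^ (2 * (s₂ - s₁) + 2)) =
        pinv 2 ((s₂ - s₁ : ℕ) : ℤ) := by
      have := pinv_succ 2 (s₂ - s₁) (by norm_num)
      rwa [show 2 * (s₂ - s₁ + 1) = 2 * (s₂ - s₁) + 2 by ring] at this
    have hc : Cq (pinv 2 (((s₂ - s₁ : ℕ) : ℤ) + 1)) * (1 - Qv ^ (2 * (s₂ - s₁) + 2)) =
        Cq (pinv 2 ((s₂ - s₁ : ℕ) : ℤ)) := by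
      rw [show (1 - Qv ^ (2 * (s₂ - s₁) + 2) : PowerSeries (PowerSeries ℚ)) =
        Cq (1 - PowerSeries.X ^ (2 * (s₂ - s₁) + 2)) by
          simp [Qv, Cq, map_sub, map_one, map_pow], ← map_mul, hp]
    simp only [Bf, Cf, agBase, Ew, map_mul]
    rw [h1, h3, h2]
    linear_combination (-(Zv ^ (r₁ + s₁ + r₂ + (s₂ + 1)) *
      Qv ^ ((r₁ + s₁) ^ 2 + s₁ ^ 2 + (r₂ + (s₂ + 1)) ^ 2 + (s₂ + 1) ^ 2 + r₁ + 2 * s₁) *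
      (Cq (pinv 1 ((r₁ : ℤ) - r₂)) * Cq (pinv 1 (r₂ : ℤ)) * Cq (pinv 2 (s₁ : ℤ))))) * hc
  · have hB0 : agBase r₁ r₂ s₁ s₂ = 0 := agBase_eq_zero _ _ _ _ (by omega)
    have h0 : 2 * (s₂ + 1) - 2 * s₁ = 0 := by omega
    simp [Bf, Cf, hB0, h0]

/-- The two multisum expressions for `𝒟⁽²⁾_{Λ̂₀+Λ̂₁}(z,q)` agree: with all sums over
`r₁, r₂, s₁, s₂ ≥ 0` (and `r₃ = 0`, `s₀ = 0`),
`Σ ∏ᵢ [z^{rᵢ+sᵢ} q^{(rᵢ+sᵢ)²+sᵢ²+δ_{i,2}(rᵢ+2sᵢ)}/((q;q)_{rᵢ−rᵢ₊₁}(q²;q²)_{sᵢ−sᵢ₋₁})]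
   (1 + z q^{2+r₁+r₂+2s₁+2s₂})
 = Σ ∏ᵢ [z^{rᵢ+sᵢ} q^{(rᵢ+sᵢ)²+sᵢ²}/((q;q)_{rᵢ−rᵢ₊₁}(q²;q²)_{sᵢ−sᵢ₋₁})]
   (q^{r₂+2s₂} + q^{r₁+2s₁}(1 − q^{2s₂−2s₁}))`. -/
theorem D3_multisum_rewriting :
    (∑' t : ℕ × ℕ × ℕ × ℕ,
      agBase t.1 t.2.1 t.2.2.1 t.2.2.2 *
        Qv ^ ((t.1 + t.2.2.1) ^ 2 + t.2.2.1 ^ 2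
          + (t.2.1 + t.2.2.2) ^ 2 + t.2.2.2 ^ 2 + t.2.1 + 2 * t.2.2.2) *
        (1 + Zv * Qv ^ (2 + t.1 + t.2.1 + 2 * t.2.2.1 + 2 * t.2.2.2))) =
    (∑' t : ℕ × ℕ × ℕ × ℕ,
      agBase t.1 t.2.1 t.2.2.1 t.2.2.2 *
        Qv ^ ((t.1 + t.2.2.1) ^ 2 + t.2.2.1 ^ 2
          + (t.2.1 + t.2.2.2) ^ 2 + t.2.2.2 ^ 2) *
        (Qv ^ (t.2.1 + 2 * t.2.2.2) +
          Qv ^ (t.1 + 2 * t.2.2.1) * (1 - Qv ^ (2 * t.2.2.2 - 2 * t.2.2.1)))) := by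
  have hL : ∀ t : ℕ × ℕ × ℕ × ℕ,
      agBase t.1 t.2.1 t.2.2.1 t.2.2.2 *
        Qv ^ ((t.1 + t.2.2.1) ^ 2 + t.2.2.1 ^ 2
          + (t.2.1 + t.2.2.2) ^ 2 + t.2.2.2 ^ 2 + t.2.1 + 2 * t.2.2.2) *
        (1 + Zv * Qv ^ (2 + t.1 + t.2.1 + 2 * t.2.2.1 + 2 * t.2.2.2)) = Af t + Bf t := by
    intro t
    simp only [Af, Bf, Ew]
    ring
  have hR : ∀ t : ℕ × ℕ × ℕ × ℕ,
      agBase t.1 t.2.1 t.2.2.1 t.2.2.2 *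
        Qv ^ ((t.1 + t.2.2.1) ^ 2 + t.2.2.1 ^ 2
          + (t.2.1 + t.2.2.2) ^ 2 + t.2.2.2 ^ 2) *
        (Qv ^ (t.2.1 + 2 * t.2.2.2) +
          Qv ^ (t.1 + 2 * t.2.2.1) * (1 - Qv ^ (2 * t.2.2.2 - 2 * t.2.2.1))) = Af t + Cf t := by
    intro t
    simp only [Af, Cf, Ew]
    ring
  have hBCsum : ∑' t, Bf t = ∑' t, Cf t := by
    have hinj : Function.Injective
        (fun t : ℕ × ℕ × ℕ × ℕ => ((t.1, t.2.1, t.2.2.1, t.2.2.2 + 1) : ℕ × ℕ × ℕ × ℕ)) := by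
      intro a b hab
      obtain ⟨a1, a2, a3, a4⟩ := a
      obtain ⟨b1, b2, b3, b4⟩ := b
      simp only [Prod.mk.injEq] at hab
      simp only [Prod.mk.injEq]
      omega
    have hsupp : Function.support Cf ⊆ Set.range
        (fun t : ℕ × ℕ × ℕ × ℕ => ((t.1, t.2.1, t.2.2.1, t.2.2.2 + 1) : ℕ × ℕ × ℕ × ℕ)) := by
      intro t ht
      obtain ⟨t1, t2, t3, t4⟩ := t
      have h4 : t4 ≠ 0 := fun h0 => ht (Cf_zero (t1, t2, t3, t4) h0)
      exact ⟨(t1, t2, t3, t4 - 1), by simp only [Prod.mk.injEq, true_and]; omega⟩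
    calc ∑' t, Bf t = ∑' t : ℕ × ℕ × ℕ × ℕ, Cf (t.1, t.2.1, t.2.2.1, t.2.2.2 + 1) :=
          tsum_congr hBC
      _ = ∑' t, Cf t := hinj.tsum_eq hsupp
  calc (∑' t : ℕ × ℕ × ℕ × ℕ,
      agBase t.1 t.2.1 t.2.2.1 t.2.2.2 *
        Qv ^ ((t.1 + t.2.2.1) ^ 2 + t.2.2.1 ^ 2
          + (t.2.1 + t.2.2.2) ^ 2 + t.2.2.2 ^ 2 + t.2.1 + 2 * t.2.2.2) *
        (1 + Zv * Qv ^ (2 + t.1 + t.2.1 + 2 * t.2.2.1 + 2 * t.2.2.2)))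
      = ∑' t, (Af t + Bf t) := tsum_congr hL
    _ = (∑' t, Af t) + ∑' t, Bf t := hA.tsum_add hB
    _ = (∑' t, Af t) + ∑' t, Cf t := by rw [hBCsum]
    _ = ∑' t, (Af t + Cf t) := (hA.tsum_add hC).symm
    _ = _ := (tsum_congr hR).symm
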